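/- Let v be a special point, u ∈ W₀, and D := v + u(C), and suppose C ∩ D = ∅. Then there exists an infinite sequence (A′₀, A′₁, A′₂, …) of alcoves such that A′₀ = A₀, A′ᵢ ⊆ C for all i, A′ᵢ and A′ᵢ₊₁ are adjacent for all i, every finite subsequence (A′ᵢ, …, A′ⱼ) with i ≤ j is a minimal gallery (that is, j − i = d(A′ᵢ, A′ⱼ)), and min{d(A′ᵢ, B) : B an alcove with B ⊆ D} tends to infinity as i → ∞. -/

import Mathlib

open RealInnerProductSpace

/-- A finite, reduced, irreducible, crystallographic root system spanning `V`,
together with a regular vector `ξ` determining the positive system. -/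
structure RootSystemData (V : Type*) [NormedAddCommGroup V] [InnerProductSpace ℝ V] where
  Φ : Set V
  ξ : V
  finite : Φ.Finite
  nonzero : ∀ α ∈ Φ, α ≠ 0
  reduced : ∀ α ∈ Φ, ∀ c : ℝ, c • α ∈ Φ → c = 1 ∨ c = -1
  crystallographic : ∀ α ∈ Φ, ∀ β ∈ Φ, ∃ n : ℤ, 2 * ⟪β, α⟫ / ⟪α, α⟫ = (n : ℝ)
  reflect_mem : ∀ α ∈ Φ, ∀ β ∈ Φ, β - (2 * ⟪β, α⟫ / ⟪α, α⟫) • α ∈ Φ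
  spans : Submodule.span ℝ Φ = ⊤
  irreducible : ∀ Φ₁ Φ₂ : Set V, Φ = Φ₁ ∪ Φ₂ →
    (∀ a ∈ Φ₁, ∀ b ∈ Φ₂, ⟪a, b⟫ = (0 : ℝ)) → Φ₁ = ∅ ∨ Φ₂ = ∅
  regular : ∀ α ∈ Φ, ⟪ξ, α⟫ ≠ (0 : ℝ)

/-- The affine orthogonal reflection of `V` fixing the hyperplane `{x | ⟪x, α⟫ = k}` pointwise. -/
noncomputable def reflPt {V : Type*} [NormedAddCommGroup V] [InnerProductSpace ℝ V]
    (α : V) (k : ℝ) (x : V) : V := x - ((⟪x, α⟫ - k) * (2 / ⟪α, α⟫)) • α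

namespace RootSystemData

variable {V : Type*} [NormedAddCommGroup V] [InnerProductSpace ℝ V]

/-- The positive system `Φ⁺` determined by `ξ`. -/
def pos (R : RootSystemData V) : Set V := {α | α ∈ R.Φ ∧ 0 < ⟪R.ξ, α⟫}

/-- The open dominant Weyl chamber `C`. -/
def chamber (R : RootSystemData V) : Set V := {x | ∀ α ∈ R.pos, 0 < ⟪x, α⟫}

/-- The opposite chamber `−C`. -/
def antiChamber (R : RootSystemData V) : Set V := {x | -x ∈ R.chamber}

/-- The affine root hyperplane `H_{α,k}`. -/
def hyp (R : RootSystemData V) (α : V) (k : ℤ) : Set V := {x | ⟪x, α⟫ = (k : ℝ)}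

/-- `H` is an affine root hyperplane. -/
def IsHyp (R : RootSystemData V) (H : Set V) : Prop := ∃ α ∈ R.Φ, ∃ k : ℤ, H = R.hyp α k

/-- The union of all affine root hyperplanes. -/
def hypUnion (R : RootSystemData V) : Set V := {x | ∃ α ∈ R.Φ, ∃ k : ℤ, ⟪x, α⟫ = (k : ℝ)}

/-- An alcove: a connected component of the complement of the union of the affine root
hyperplanes. -/
def IsAlcove (R : RootSystemData V) (A : Set V) : Prop :=
  ∃ x ∈ R.hypUnionᶜ, A = connectedComponentIn R.hypUnionᶜ x

/-- The base alcove `A₀`. -/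
def baseAlcove (R : RootSystemData V) : Set V :=
  {x | ∀ α ∈ R.pos, 0 < ⟪x, α⟫ ∧ ⟪x, α⟫ < 1}

/-- The sets `A` and `B` lie in the same open half-space determined by the affine root
hyperplane `H`. -/
def SameSide (R : RootSystemData V) (H A B : Set V) : Prop :=
  ∃ α ∈ R.Φ, ∃ k : ℤ, H = R.hyp α k ∧
    ((∀ x ∈ A ∪ B, ⟪x, α⟫ < (k : ℝ)) ∨ (∀ x ∈ A ∪ B, (k : ℝ) < ⟪x, α⟫))

/-- The affine root hyperplane `H` separates `A` and `B`: they lie in the two different open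
half-spaces determined by `H`. -/
def Separates (R : RootSystemData V) (H A B : Set V) : Prop :=
  ∃ α ∈ R.Φ, ∃ k : ℤ, H = R.hyp α k ∧
    (((∀ x ∈ A, ⟪x, α⟫ < (k : ℝ)) ∧ (∀ x ∈ B, (k : ℝ) < ⟪x, α⟫)) ∨
     ((∀ x ∈ B, ⟪x, α⟫ < (k : ℝ)) ∧ (∀ x ∈ A, (k : ℝ) < ⟪x, α⟫)))

/-- `d(A, B)`: the number of affine root hyperplanes separating `A` from `B`. -/
noncomputable def dist (R : RootSystemData V) (A B : Set V) : ℕ :=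
  {H : Set V | R.IsHyp H ∧ R.Separates H A B}.ncard

/-- Two alcoves are adjacent. -/
def Adjacent (R : RootSystemData V) (A B : Set V) : Prop := A ≠ B ∧ R.dist A B = 1

/-- `H` is a wall of the alcove `A`: it is an affine root hyperplane with
`d(A, r_H(A)) = 1`. -/
def IsWall (R : RootSystemData V) (H A : Set V) : Prop :=
  ∃ α ∈ R.Φ, ∃ k : ℤ, H = R.hyp α k ∧ R.dist A (reflPt α (k : ℝ) '' A) = 1

/-- `H` is a wall of the dominant chamber `C`: `H ∩ C = ∅` and `H ∩ closure C` affinely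
spans `H`. -/
def IsChamberWall (R : RootSystemData V) (H : Set V) : Prop :=
  R.IsHyp H ∧ H ∩ R.chamber = ∅ ∧ affineSpan ℝ (H ∩ closure R.chamber) = affineSpan ℝ H

/-- A special point of `V`. -/
def IsSpecial (R : RootSystemData V) (v : V) : Prop := ∀ α ∈ R.Φ, ∃ n : ℤ, ⟪v, α⟫ = (n : ℝ)

/-- The finite Weyl group `W₀`: the group of linear isometries of `V` generated by the
reflections in the hyperplanes `H_{α,0}`, `α ∈ Φ`. -/
def W0 (R : RootSystemData V) : Subgroup (V ≃ₗᵢ[ℝ] V) :=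
  Subgroup.closure {f | ∃ α ∈ R.Φ, ∀ x, f x = reflPt α 0 x}

/-- A finite gallery `(Bs 0, …, Bs n)`: consecutive alcoves are adjacent. -/
def IsGallery (R : RootSystemData V) (Bs : ℕ → Set V) (n : ℕ) : Prop :=
  (∀ i ≤ n, R.IsAlcove (Bs i)) ∧ ∀ i < n, R.Adjacent (Bs i) (Bs (i + 1))

/-- The Umbrella property for a gallery `(Bs 0, …, Bs n)`, an alcove `A` and a wall `H`
of `A`: every alcove of the gallery is on the same side of `H` as `A`, and the gallery can
be extended to a minimal gallery from `Bs 0` to `A`. -/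
def Umbrella (R : RootSystemData V) (Bs : ℕ → Set V) (n : ℕ) (A H : Set V) : Prop :=
  R.IsWall H A ∧ (∀ i ≤ n, R.SameSide H (Bs i) A) ∧
    ∃ m, n ≤ m ∧ ∃ Cs : ℕ → Set V, (∀ i ≤ n, Cs i = Bs i) ∧ Cs m = A ∧
      R.IsGallery Cs m ∧ R.dist (Cs 0) (Cs m) = m

/-- The length of an invertible affine transformation: `ℓ(g) = d(A₀, g(A₀))`. -/
noncomputable def len (R : RootSystemData V) (g : V ≃ᵃ[ℝ] V) : ℕ :=
  R.dist R.baseAlcove (⇑g '' R.baseAlcove)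

/-- `g` is a translation of `V`. -/
def IsTranslation (g : V ≃ᵃ[ℝ] V) : Prop := ∃ v : V, ∀ x, g x = x + v

/-- `s ∈ S_aff`: `s` is the reflection in an affine root hyperplane which is a wall of the
base alcove `A₀`. -/
def IsSimpleRefl (R : RootSystemData V) (s : V ≃ᵃ[ℝ] V) : Prop :=
  ∃ α ∈ R.Φ, ∃ k : ℤ, R.IsWall (R.hyp α k) R.baseAlcove ∧ ∀ x, s x = reflPt α (k : ℝ) x

end RootSystemData

/-- The sequence of iterated conjugates `g, s₁gs₁, s₂s₁gs₁s₂, …`. -/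
noncomputable def conjSeq {V : Type*} [NormedAddCommGroup V] [InnerProductSpace ℝ V]
    (g : V ≃ᵃ[ℝ] V) (ss : ℕ → V ≃ᵃ[ℝ] V) : ℕ → V ≃ᵃ[ℝ] V
  | 0 => g
  | n + 1 => ss n * conjSeq g ss n * ss n

namespace RootSystemData

variable {V : Type*} [NormedAddCommGroup V] [InnerProductSpace ℝ V]

/-- The Diamond Property for `g`: a sequence of length-preserving conjugations by simple
reflections leads to an element `g′` admitting a simple reflection `s` with
`ℓ(sg′) > ℓ(g′)`, `ℓ(g′s) > ℓ(g′)` and `sg′s ≠ g′`. -/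
def DiamondProperty (R : RootSystemData V) (g : V ≃ᵃ[ℝ] V) : Prop :=
  ∃ (n : ℕ) (ss : ℕ → V ≃ᵃ[ℝ] V), (∀ i < n, R.IsSimpleRefl (ss i)) ∧
    (∀ i < n, R.len (conjSeq g ss (i + 1)) = R.len g) ∧
    ∃ s : V ≃ᵃ[ℝ] V, R.IsSimpleRefl s ∧
      R.len (s * conjSeq g ss n) > R.len (conjSeq g ss n) ∧
      R.len (conjSeq g ss n * s) > R.len (conjSeq g ss n) ∧
      s * conjSeq g ss n * s ≠ conjSeq g ss n

end RootSystemData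

noncomputable def flrF {V : Type*} [NormedAddCommGroup V] [InnerProductSpace ℝ V]
    (x : V) : V → ℤ := fun α => ⌊(⟪x, α⟫ : ℝ)⌋

namespace RootSystemData

variable {V : Type*} [NormedAddCommGroup V] [InnerProductSpace ℝ V]


-- my aux defs
def BoxF (R : RootSystemData V) (f : V → ℤ) : Set V :=
  {y | ∀ α ∈ R.pos, ((f α : ℝ) < ⟪y, α⟫ ∧ ⟪y, α⟫ < f α + 1)}


theorem pos_finite (R : RootSystemData V) : R.pos.Finite := R.finite.subset fun _ h => h.1

theorem inner_self_ne (R : RootSystemData V) {α : V} (hα : α ∈ R.Φ) : ⟪α, α⟫ ≠ (0 : ℝ) := by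
  intro h
  exact R.nonzero α hα (inner_self_eq_zero.mp h)

theorem neg_mem (R : RootSystemData V) {α : V} (hα : α ∈ R.Φ) : -α ∈ R.Φ := by
  have h := R.reflect_mem α hα α hα
  have h2 : 2 * ⟪α, α⟫ / ⟪α, α⟫ = (2 : ℝ) := by
    field_simp [R.inner_self_ne hα]
    exact div_self (R.inner_self_ne hα)
  rw [h2] at h
  have : α - (2 : ℝ) • α = -α := by
    rw [show ((2:ℝ) • α) = α + α by rw [two_smul]]
    abel
  rwa [this] at h

theorem not_int (R : RootSystemData V) {x α : V} (hx : x ∈ R.hypUnionᶜ) (hα : α ∈ R.Φ)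
    (k : ℤ) : ⟪x, α⟫ ≠ (k : ℝ) := fun h => hx ⟨α, hα, k, h⟩

theorem int_not_between {a k : ℤ} (h1 : (a : ℝ) < k) (h2 : (k : ℝ) < a + 1) : False := by
  have h1' : a < k := by exact_mod_cast h1
  have h2' : (k : ℝ) < ((a + 1 : ℤ) : ℝ) := by push_cast; linarith
  have : k < a + 1 := by exact_mod_cast h2'
  omega

theorem boxF_subset_compl (R : RootSystemData V) (f : V → ℤ) : R.BoxF f ⊆ R.hypUnionᶜ := by
  intro y hy hmem
  obtain ⟨α, hα, k, hk⟩ := hmem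
  rcases lt_or_gt_of_ne (R.regular α hα) with hneg | hpos
  · have hnα : -α ∈ R.pos := ⟨R.neg_mem hα, by rw [inner_neg_right]; linarith⟩
    obtain ⟨h1, h2⟩ := hy (-α) hnα
    rw [inner_neg_right, hk] at h1 h2
    refine int_not_between (k := -k) (a := f (-α)) (by push_cast; linarith) (by push_cast; linarith)
  · obtain ⟨h1, h2⟩ := hy α ⟨hα, hpos⟩
    rw [hk] at h1 h2
    exact int_not_between h1 h2

theorem inner_cont (α : V) : Continuous fun y : V => (⟪y, α⟫ : ℝ) :=
  continuous_id.inner continuous_const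

theorem boxF_open (R : RootSystemData V) (f : V → ℤ) : IsOpen (R.BoxF f) := by
  have : R.BoxF f = ⋂ α ∈ R.pos, (fun y : V => (⟪y, α⟫ : ℝ)) ⁻¹' Set.Ioo (f α : ℝ) ((f α : ℝ) + 1) := by
    ext y; simp [BoxF, Set.mem_Ioo]
  rw [this]
  exact R.pos_finite.isOpen_biInter fun α _ => isOpen_Ioo.preimage (inner_cont α)

theorem boxF_convex (R : RootSystemData V) (f : V → ℤ) : Convex ℝ (R.BoxF f) := by
  have : R.BoxF f = ⋂ α ∈ R.pos, (fun y : V => (⟪y, α⟫ : ℝ)) ⁻¹' Set.Ioo (f α : ℝ) ((f α : ℝ) + 1) := by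
    ext y; simp [BoxF, Set.mem_Ioo]
  rw [this]
  refine convex_iInter₂ fun α _ => (convex_Ioo _ _).is_linear_preimage ?_
  constructor
  · intro x y; exact inner_add_left x y α
  · intro c x; exact real_inner_smul_left x α c

theorem mem_boxF_self (R : RootSystemData V) {x : V} (hx : x ∈ R.hypUnionᶜ) :
    x ∈ R.BoxF (flrF x) := by
  intro α hα
  refine ⟨lt_of_le_of_ne (Int.floor_le _) (Ne.symm (R.not_int hx hα.1 _)), Int.lt_floor_add_one _⟩

theorem component_eq_boxF (R : RootSystemData V) {x : V} (hx : x ∈ R.hypUnionᶜ) :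
    connectedComponentIn R.hypUnionᶜ x = R.BoxF (flrF x) := by
  apply Set.Subset.antisymm
  · intro y hy α hα
    have hyc : y ∈ R.hypUnionᶜ := connectedComponentIn_subset _ _ hy
    have hxel : x ∈ connectedComponentIn R.hypUnionᶜ x := mem_connectedComponentIn hx
    have hpre : IsPreconnected (connectedComponentIn R.hypUnionᶜ x) :=
      isPreconnected_connectedComponentIn
    have hcont : ContinuousOn (fun z : V => (⟪z, α⟫ : ℝ)) (connectedComponentIn R.hypUnionᶜ x) :=
      (inner_cont α).continuousOn
    constructor
    · by_contra h
      push_neg at h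
      have hlt : ⟪y, α⟫ < ((⌊⟪x, α⟫⌋ : ℤ) : ℝ) := lt_of_le_of_ne h (R.not_int hyc hα.1 _)
      obtain ⟨z, hz, hzv⟩ := hpre.intermediate_value hy hxel hcont
        ⟨le_of_lt hlt, Int.floor_le _⟩
      exact R.not_int (connectedComponentIn_subset _ _ hz) hα.1 _ hzv
    · by_contra h
      push_neg at h
      have hlt : ((⌊⟪x, α⟫⌋ + 1 : ℤ) : ℝ) ≤ ⟪y, α⟫ := by push_cast; exact_mod_cast h
      have hlt' : ((⌊⟪x, α⟫⌋ + 1 : ℤ) : ℝ) < ⟪y, α⟫ :=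
        lt_of_le_of_ne hlt (Ne.symm (R.not_int hyc hα.1 _))
      obtain ⟨z, hz, hzv⟩ := hpre.intermediate_value hxel hy hcont
        ⟨by push_cast; exact le_of_lt (Int.lt_floor_add_one _), le_of_lt hlt'⟩
      exact R.not_int (connectedComponentIn_subset _ _ hz) hα.1 _ hzv
  · exact (R.boxF_convex _).isPreconnected.subset_connectedComponentIn
      (R.mem_boxF_self hx) (R.boxF_subset_compl _)



theorem hyp_inj (R : RootSystemData V) {α β : V} {k m : ℤ} (hα : α ∈ R.pos) (hβ : β ∈ R.pos)
    (h : R.hyp α k = R.hyp β m) : α = β ∧ k = m := by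
  have hα0 : ⟪α, α⟫ ≠ (0 : ℝ) := R.inner_self_ne hα.1
  set x : V := ((k : ℝ) / ⟪α, α⟫) • α with hxdef
  have hx : ⟪x, α⟫ = (k : ℝ) := by
    rw [hxdef, real_inner_smul_left]; field_simp
  have hxβ : ⟪x, β⟫ = (m : ℝ) := by
    have : x ∈ R.hyp α k := hx
    rw [h] at this; exact this
  set c : ℝ := ⟪β, α⟫ / ⟪α, α⟫ with hcdef
  set y : V := β - c • α with hydef
  have hyα : ⟪y, α⟫ = 0 := by
    rw [hydef, inner_sub_left, real_inner_smul_left, hcdef]; field_simp; ring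
  have hxy : x + y ∈ R.hyp α k := by
    show ⟪x + y, α⟫ = (k : ℝ); rw [inner_add_left, hyα, hx, add_zero]
  rw [h] at hxy
  have hxyβ : ⟪x + y, β⟫ = (m : ℝ) := hxy
  have hyβ : ⟪y, β⟫ = 0 := by rw [inner_add_left, hxβ] at hxyβ; linarith
  have hy0 : y = 0 := by
    have hyy : ⟪y, y⟫ = (0 : ℝ) := by
      rw [hydef, inner_sub_right, real_inner_smul_right]
      rw [hydef] at hyβ hyα
      rw [hyβ, hyα]; ring
    exact inner_self_eq_zero.mp hyy
  have hβc : β = c • α := by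
    have := sub_eq_zero.mp hy0; rw [hydef] at hy0; exact sub_eq_zero.mp hy0
  have hcases := R.reduced α hα.1 c (by rw [← hβc]; exact hβ.1)
  rcases hcases with h1 | h1
  · rw [h1, one_smul] at hβc
    refine ⟨hβc.symm, ?_⟩
    rw [hβc, hx] at hxβ
    exact_mod_cast hxβ
  · exfalso
    rw [h1, neg_one_smul] at hβc
    have h2 := hβ.2
    rw [hβc, inner_neg_right] at h2
    linarith [hα.2]

def PairSet (R : RootSystemData V) (f g : V → ℤ) : Set (V × ℤ) :=
  {p | p.1 ∈ R.pos ∧ ((g p.1 < p.2 ∧ p.2 ≤ f p.1) ∨ (f p.1 < p.2 ∧ p.2 ≤ g p.1))}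

theorem mem_pairSet {R : RootSystemData V} {f g : V → ℤ} {α : V} {k : ℤ} :
    (α, k) ∈ R.PairSet f g ↔ α ∈ R.pos ∧ ((g α < k ∧ k ≤ f α) ∨ (f α < k ∧ k ≤ g α)) :=
  Iff.rfl

theorem pairSet_finite (R : RootSystemData V) (f g : V → ℤ) : (R.PairSet f g).Finite := by
  apply Set.Finite.subset
    (R.pos_finite.biUnion fun α (_ : α ∈ R.pos) =>
      ((Set.finite_Ioc (min (f α) (g α)) (max (f α) (g α))).image fun k => (α, k)))
  rintro ⟨α, k⟩ hp
  rw [mem_pairSet] at hp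
  obtain ⟨h1, h2⟩ := hp
  simp only [Set.mem_iUnion, Set.mem_image, Set.mem_Ioc]
  exact ⟨α, h1, k, by constructor; omega; omega, rfl⟩

theorem hyp_injOn (R : RootSystemData V) (f g : V → ℤ) :
    Set.InjOn (fun p : V × ℤ => R.hyp p.1 p.2) (R.PairSet f g) := by
  rintro ⟨α, k⟩ hp ⟨β, m⟩ hq hpq
  rw [mem_pairSet] at hp hq
  obtain ⟨h1, h2⟩ := R.hyp_inj hp.1 hq.1 hpq
  simp only [Prod.mk.injEq]
  exact ⟨h1, h2⟩

theorem hyp_neg (R : RootSystemData V) (α : V) (k : ℤ) : R.hyp α k = R.hyp (-α) (-k) := by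
  ext x
  simp only [hyp, Set.mem_setOf_eq, inner_neg_right, Int.cast_neg]
  constructor <;> intro h <;> linarith

theorem sep_eq (R : RootSystemData V) (f g : V → ℤ) (hf : (R.BoxF f).Nonempty)
    (hg : (R.BoxF g).Nonempty) :
    {H : Set V | R.IsHyp H ∧ R.Separates H (R.BoxF f) (R.BoxF g)} =
      (fun p : V × ℤ => R.hyp p.1 p.2) '' R.PairSet f g := by
  obtain ⟨xf, hxf⟩ := hf
  obtain ⟨xg, hxg⟩ := hg
  ext H
  constructor
  · rintro ⟨-, α', hα', k', hH, hcases⟩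
    rcases lt_or_gt_of_ne (R.regular α' hα') with hneg | hpos
    · -- use (-α', -k')
      have hmem : -α' ∈ R.pos := ⟨R.neg_mem hα', by rw [inner_neg_right]; linarith⟩
      refine ⟨(-α', -k'), mem_pairSet.mpr ⟨hmem, ?_⟩, by
        show R.hyp (-α') (-k') = H
        rw [hH, R.hyp_neg α' k']⟩
      obtain ⟨hf1, hf2⟩ := hxf (-α') hmem
      obtain ⟨hg1, hg2⟩ := hxg (-α') hmem
      rcases hcases with ⟨hA, hB⟩ | ⟨hB, hA⟩
      · -- ∀x∈Bf ⟪x,α'⟫<k', i.e. ⟪x,-α'⟫ > -k' : Bf above, Bg below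
        have h1 := hA xf hxf; have h2 := hB xg hxg
        rw [show ⟪xf, α'⟫ = -⟪xf, -α'⟫ by rw [inner_neg_right]; ring] at h1
        rw [show ⟪xg, α'⟫ = -⟪xg, -α'⟫ by rw [inner_neg_right]; ring] at h2
        -- -k' < ⟪xf,-α'⟫ < f(-α')+1  so -k' ≤ f(-α') ; g(-α') < ⟪xg,-α'⟫ < -k' so g(-α') < -k'
        left
        constructor
        · -- g (-α') < -k'
          have : (g (-α') : ℝ) < (-k' : ℤ) := by push_cast; linarith
          exact_mod_cast this
        · have : ((-k' : ℤ) : ℝ) < (f (-α') : ℝ) + 1 := by push_cast; linarith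
          have : ((-k' : ℤ) : ℝ) < ((f (-α') + 1 : ℤ) : ℝ) := by push_cast; linarith
          have h3 : (-k' : ℤ) < f (-α') + 1 := by exact_mod_cast this
          omega
      · have h1 := hA xf hxf; have h2 := hB xg hxg
        rw [show ⟪xf, α'⟫ = -⟪xf, -α'⟫ by rw [inner_neg_right]; ring] at h1
        rw [show ⟪xg, α'⟫ = -⟪xg, -α'⟫ by rw [inner_neg_right]; ring] at h2
        right
        constructor
        · have : (f (-α') : ℝ) < (-k' : ℤ) := by push_cast; linarith
          exact_mod_cast this
        · have : ((-k' : ℤ) : ℝ) < ((g (-α') + 1 : ℤ) : ℝ) := by push_cast; linarith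
          have h3 : (-k' : ℤ) < g (-α') + 1 := by exact_mod_cast this
          omega
    · have hmem : α' ∈ R.pos := ⟨hα', hpos⟩
      refine ⟨(α', k'), mem_pairSet.mpr ⟨hmem, ?_⟩, hH.symm⟩
      obtain ⟨hf1, hf2⟩ := hxf α' hmem
      obtain ⟨hg1, hg2⟩ := hxg α' hmem
      rcases hcases with ⟨hA, hB⟩ | ⟨hB, hA⟩
      · have h1 := hA xf hxf; have h2 := hB xg hxg
        right
        constructor
        · have : (f α' : ℝ) < (k' : ℤ) := by push_cast; linarith
          exact_mod_cast this
        · have : ((k' : ℤ) : ℝ) < ((g α' + 1 : ℤ) : ℝ) := by push_cast; linarith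
          have h3 : (k' : ℤ) < g α' + 1 := by exact_mod_cast this
          omega
      · have h1 := hA xf hxf; have h2 := hB xg hxg
        left
        constructor
        · have : (g α' : ℝ) < (k' : ℤ) := by push_cast; linarith
          exact_mod_cast this
        · have : ((k' : ℤ) : ℝ) < ((f α' + 1 : ℤ) : ℝ) := by push_cast; linarith
          have h3 : (k' : ℤ) < f α' + 1 := by exact_mod_cast this
          omega
  · rintro ⟨⟨α, k⟩, hp, rfl⟩
    rw [mem_pairSet] at hp
    obtain ⟨hmem, hcond⟩ := hp
    refine ⟨⟨α, hmem.1, k, rfl⟩, α, hmem.1, k, rfl, ?_⟩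
    rcases hcond with ⟨h1, h2⟩ | ⟨h1, h2⟩
    · -- g α < k ≤ f α : Bg below k, Bf above k
      right
      constructor
      · intro x hx
        obtain ⟨-, hx2⟩ := hx α hmem
        have : ((g α + 1 : ℤ) : ℝ) ≤ (k : ℝ) := by exact_mod_cast (by omega : g α + 1 ≤ k)
        push_cast at this ⊢
        linarith
      · intro x hx
        obtain ⟨hx1, -⟩ := hx α hmem
        have : (k : ℝ) ≤ (f α : ℝ) := by exact_mod_cast h2
        linarith
    · left
      constructor
      · intro x hx
        obtain ⟨-, hx2⟩ := hx α hmem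
        have : ((f α + 1 : ℤ) : ℝ) ≤ (k : ℝ) := by exact_mod_cast (by omega : f α + 1 ≤ k)
        push_cast at this ⊢
        linarith
      · intro x hx
        obtain ⟨hx1, -⟩ := hx α hmem
        have : (k : ℝ) ≤ (g α : ℝ) := by exact_mod_cast h2
        linarith

theorem dist_boxF (R : RootSystemData V) (f g : V → ℤ) (hf : (R.BoxF f).Nonempty)
    (hg : (R.BoxF g).Nonempty) :
    R.dist (R.BoxF f) (R.BoxF g) = (R.PairSet f g).ncard := by
  unfold dist
  rw [R.sep_eq f g hf hg]
  exact Set.ncard_image_of_injOn (R.hyp_injOn f g)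

theorem pairSet_self (R : RootSystemData V) (f : V → ℤ) : R.PairSet f f = ∅ := by
  ext ⟨α, k⟩
  simp only [mem_pairSet, Set.mem_empty_iff_false, iff_false]
  rintro ⟨-, h⟩; omega

theorem pairSet_union (R : RootSystemData V) {f g h : V → ℤ}
    (hfg : ∀ α ∈ R.pos, f α ≤ g α) (hgh : ∀ α ∈ R.pos, g α ≤ h α) :
    R.PairSet f h = R.PairSet f g ∪ R.PairSet g h ∧ Disjoint (R.PairSet f g) (R.PairSet g h) := by
  constructor
  · ext ⟨α, k⟩
    simp only [Set.mem_union, mem_pairSet]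
    constructor
    · rintro ⟨hm, hc⟩
      have h1 := hfg α hm; have h2 := hgh α hm
      rcases hc with ⟨a, b⟩ | ⟨a, b⟩
      · omega
      · by_cases hk : k ≤ g α
        · exact Or.inl ⟨hm, by omega⟩
        · exact Or.inr ⟨hm, by omega⟩
    · rintro (⟨hm, hc⟩ | ⟨hm, hc⟩)
      · have h1 := hfg α hm; have h2 := hgh α hm
        exact ⟨hm, by omega⟩
      · have h1 := hfg α hm; have h2 := hgh α hm
        exact ⟨hm, by omega⟩
  · rw [Set.disjoint_left]
    rintro ⟨α, k⟩ hp hq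
    rw [mem_pairSet] at hp hq
    obtain ⟨hm, hc⟩ := hp; obtain ⟨hm', hc'⟩ := hq
    have h1 := hfg α hm; have h2 := hgh α hm
    omega

theorem pairSet_single (R : RootSystemData V) {f g : V → ℤ} {γ : V} (hγ : γ ∈ R.pos)
    (hbump : g γ = f γ + 1) (hne : ∀ α ∈ R.pos, α ≠ γ → g α = f α) :
    R.PairSet f g = {(γ, f γ + 1)} := by
  ext ⟨α, k⟩
  simp only [mem_pairSet, Set.mem_singleton_iff, Prod.mk.injEq]
  constructor
  · rintro ⟨hm, hc⟩
    by_cases hα : α = γ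
    · subst hα
      exact ⟨rfl, by omega⟩
    · have := hne α hm hα
      omega
  · rintro ⟨rfl, rfl⟩
    exact ⟨hγ, by omega⟩




theorem inner_ray (x₀ : V) (ξ : V) (t : ℝ) (α : V) :
    ⟪x₀ + t • ξ, α⟫ = ⟪x₀, α⟫ + t * ⟪ξ, α⟫ := by
  rw [inner_add_left, real_inner_smul_left]

theorem step (R : RootSystemData V) (hP : R.pos.Nonempty) {x₀ : V}
    (hgen : ∀ t : ℝ, ∀ α ∈ R.pos, ∀ β ∈ R.pos, α ≠ β → ∀ k m : ℤ,
      ¬(⟪x₀ + t • R.ξ, α⟫ = (k : ℝ) ∧ ⟪x₀ + t • R.ξ, β⟫ = (m : ℝ)))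
    (s : ℝ) (hs : x₀ + s • R.ξ ∈ R.hypUnionᶜ) :
    ∃ s', s < s' ∧ (x₀ + s' • R.ξ ∈ R.hypUnionᶜ) ∧ ∃ γ ∈ R.pos,
      (flrF (x₀ + s' • R.ξ) γ = flrF (x₀ + s • R.ξ) γ + 1) ∧
      (∀ α ∈ R.pos, α ≠ γ → flrF (x₀ + s' • R.ξ) α = flrF (x₀ + s • R.ξ) α) := by
  classical
  set f0 : V → ℤ := flrF (x₀ + s • R.ξ) with hf0
  set F : Finset V := R.pos_finite.toFinset with hFdef
  have hF : ∀ α, α ∈ F ↔ α ∈ R.pos := fun α => Set.Finite.mem_toFinset _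
  have hFne : F.Nonempty := by
    obtain ⟨α, hα⟩ := hP; exact ⟨α, (hF α).mpr hα⟩
  set tf : V → ℝ := fun α => (((f0 α + 1 : ℤ) : ℝ) - ⟪x₀, α⟫) / ⟪R.ξ, α⟫ with htf
  have hcross : ∀ α ∈ R.pos, ⟪x₀ + tf α • R.ξ, α⟫ = ((f0 α + 1 : ℤ) : ℝ) := by
    intro α hα
    rw [inner_ray, htf]
    field_simp [hα.2.ne']
    ring
  have hslt : ∀ α ∈ R.pos, s < tf α := by
    intro α hα
    have h1 : ⟪x₀ + s • R.ξ, α⟫ < (f0 α : ℝ) + 1 := Int.lt_floor_add_one _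
    rw [inner_ray] at h1
    rw [htf, lt_div_iff₀ hα.2]
    push_cast
    linarith
  obtain ⟨γ, hγF, hγmin⟩ := F.exists_min_image tf hFne
  have hγ : γ ∈ R.pos := (hF γ).mp hγF
  have huniq : ∀ β ∈ R.pos, β ≠ γ → tf γ < tf β := by
    intro β hβ hne
    rcases eq_or_lt_of_le (hγmin β ((hF β).mpr hβ)) with heq | hlt
    · exfalso
      refine hgen (tf γ) γ hγ β hβ (fun h => hne h.symm) (f0 γ + 1) (f0 β + 1)
        ⟨hcross γ hγ, ?_⟩
      rw [heq]
      exact hcross β hβ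
    · exact hlt
  set c1 : ℝ := tf γ + 1 / ⟪R.ξ, γ⟫ with hc1def
  set G : Finset ℝ := insert c1 ((F.erase γ).image tf) with hGdef
  have hGne : G.Nonempty := ⟨c1, Finset.mem_insert_self _ _⟩
  set m : ℝ := G.min' hGne with hmdef
  have hγm : tf γ < m := by
    rw [hmdef, Finset.lt_min'_iff]
    intro b hb
    rcases Finset.mem_insert.mp hb with rfl | hb'
    · have : 0 < 1 / ⟪R.ξ, γ⟫ := one_div_pos.mpr hγ.2
      rw [hc1def]; linarith
    · obtain ⟨β, hβe, rfl⟩ := Finset.mem_image.mp hb'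
      obtain ⟨hbne, hβF⟩ := Finset.mem_erase.mp hβe
      exact huniq β ((hF β).mp hβF) hbne
  set s' : ℝ := (tf γ + m) / 2 with hs'def
  have h1 : tf γ < s' := by rw [hs'def]; linarith
  have h2 : s' < m := by rw [hs'def]; linarith
  have hss' : s < s' := lt_trans (hslt γ hγ) h1
  have hms : ∀ β ∈ R.pos, β ≠ γ → s' < tf β := by
    intro β hβ hne
    refine lt_of_lt_of_le h2 (Finset.min'_le G (tf β) ?_)
    exact Finset.mem_insert_of_mem (Finset.mem_image_of_mem tf
      (Finset.mem_erase.mpr ⟨hne, (hF β).mpr hβ⟩))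
  have hc1 : s' < c1 := lt_of_lt_of_le h2 (Finset.min'_le G c1 (Finset.mem_insert_self _ _))
  -- strict bounds for the new point
  have hkeyγ : ((f0 γ + 1 : ℤ) : ℝ) < ⟪x₀ + s' • R.ξ, γ⟫ ∧
      ⟪x₀ + s' • R.ξ, γ⟫ < ((f0 γ + 1 : ℤ) : ℝ) + 1 := by
    have hb := hγ.2
    have hcr := hcross γ hγ
    rw [inner_ray] at hcr ⊢
    constructor
    · nlinarith [h1]
    · have : s' * ⟪R.ξ, γ⟫ < c1 * ⟪R.ξ, γ⟫ := by nlinarith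
      rw [hc1def] at this
      have hne : ⟪R.ξ, γ⟫ ≠ 0 := ne_of_gt hb
      have : s' * ⟪R.ξ, γ⟫ < tf γ * ⟪R.ξ, γ⟫ + 1 := by
        field_simp at this
        nlinarith [this]
      nlinarith [hcr]
  have hkeyo : ∀ α ∈ R.pos, α ≠ γ → (f0 α : ℝ) < ⟪x₀ + s' • R.ξ, α⟫ ∧
      ⟪x₀ + s' • R.ξ, α⟫ < (f0 α : ℝ) + 1 := by
    intro α hα hne
    have hb := hα.2
    have hfl : (f0 α : ℝ) ≤ ⟪x₀ + s • R.ξ, α⟫ := Int.floor_le _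
    have hup : s' < tf α := hms α hα hne
    have hcr := hcross α hα
    rw [inner_ray] at hcr hfl ⊢
    constructor
    · nlinarith [hss']
    · have : s' * ⟪R.ξ, α⟫ < tf α * ⟪R.ξ, α⟫ := by nlinarith
      push_cast at hcr
      nlinarith
  have hcompl : x₀ + s' • R.ξ ∈ R.hypUnionᶜ := by
    rintro ⟨α, hα, k, hk⟩
    rcases lt_or_gt_of_ne (R.regular α hα) with hneg | hpos
    · have hmem : -α ∈ R.pos := ⟨R.neg_mem hα, by rw [inner_neg_right]; linarith⟩
      have hk' : ⟪x₀ + s' • R.ξ, -α⟫ = ((-k : ℤ) : ℝ) := by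
        rw [inner_neg_right, hk]; push_cast; ring
      by_cases heq : -α = γ
      · obtain ⟨hl, hu⟩ := hkeyγ
        rw [← heq] at hl hu
        rw [hk'] at hl hu
        exact int_not_between hl (by push_cast at hu ⊢; linarith)
      · obtain ⟨hl, hu⟩ := hkeyo (-α) hmem heq
        rw [hk'] at hl hu
        exact int_not_between hl hu
    · have hmem : α ∈ R.pos := ⟨hα, hpos⟩
      by_cases heq : α = γ
      · obtain ⟨hl, hu⟩ := hkeyγ
        rw [← heq] at hl hu
        rw [hk] at hl hu
        exact int_not_between hl (by push_cast at hu ⊢; linarith)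
      · obtain ⟨hl, hu⟩ := hkeyo α hmem heq
        rw [hk] at hl hu
        exact int_not_between hl hu
  refine ⟨s', hss', hcompl, γ, hγ, ?_, ?_⟩
  · rw [flrF]
    rw [Int.floor_eq_iff]
    obtain ⟨hl, hu⟩ := hkeyγ
    constructor
    · push_cast at hl ⊢; linarith
    · push_cast at hu ⊢; linarith
  · intro α hα hne
    rw [flrF]
    rw [Int.floor_eq_iff]
    obtain ⟨hl, hu⟩ := hkeyo α hα hne
    exact ⟨le_of_lt hl, hu⟩




theorem exists_gallery_seq (R : RootSystemData V) (hP : R.pos.Nonempty) {x₀ : V}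
    (h₀ : x₀ + (0 : ℝ) • R.ξ ∈ R.hypUnionᶜ)
    (hgen : ∀ t : ℝ, ∀ α ∈ R.pos, ∀ β ∈ R.pos, α ≠ β → ∀ k m : ℤ,
      ¬(⟪x₀ + t • R.ξ, α⟫ = (k : ℝ) ∧ ⟪x₀ + t • R.ξ, β⟫ = (m : ℝ))) :
    ∃ s : ℕ → ℝ, s 0 = 0 ∧ (∀ i, s i < s (i + 1)) ∧ (∀ i, x₀ + s i • R.ξ ∈ R.hypUnionᶜ) ∧
      ∀ i, ∃ γ ∈ R.pos, flrF (x₀ + s (i + 1) • R.ξ) γ = flrF (x₀ + s i • R.ξ) γ + 1 ∧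
        ∀ α ∈ R.pos, α ≠ γ → flrF (x₀ + s (i + 1) • R.ξ) α = flrF (x₀ + s i • R.ξ) α := by
  let T := {t : ℝ // x₀ + t • R.ξ ∈ R.hypUnionᶜ}
  let next : T → T := fun p =>
    ⟨(R.step hP hgen p.1 p.2).choose, ((R.step hP hgen p.1 p.2).choose_spec).2.1⟩
  let S : ℕ → T := fun n => next^[n] ⟨0, h₀⟩
  have hS0 : S 0 = ⟨0, h₀⟩ := rfl
  have hsucc : ∀ i, S (i + 1) = next (S i) := fun i => Function.iterate_succ_apply' next i _
  refine ⟨fun i => (S i).1, by show (S 0).1 = 0; rw [hS0], ?_, fun i => (S i).2, ?_⟩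
  · intro i
    have h := ((R.step hP hgen (S i).1 (S i).2).choose_spec).1
    show (S i).1 < (S (i + 1)).1
    rw [hsucc i]
    exact h
  · intro i
    have h := ((R.step hP hgen (S i).1 (S i).2).choose_spec).2.2
    show ∃ γ ∈ R.pos, flrF (x₀ + (S (i + 1)).1 • R.ξ) γ = flrF (x₀ + (S i).1 • R.ξ) γ + 1 ∧
      ∀ α ∈ R.pos, α ≠ γ → flrF (x₀ + (S (i + 1)).1 • R.ξ) α = flrF (x₀ + (S i).1 • R.ξ) α
    rw [hsucc i]
    exact h

theorem exists_nonorth : ∀ Z : Finset V, (∀ ζ ∈ Z, ζ ≠ (0 : V)) →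
    ∃ q : V, ∀ ζ ∈ Z, ⟪q, ζ⟫ ≠ (0 : ℝ) := by
  classical
  intro Z
  induction Z using Finset.induction_on with
  | empty => exact fun _ => ⟨0, by simp⟩
  | @insert ζ₀ Zs hnotmem ih =>
    intro hall
    obtain ⟨q, hq⟩ := ih fun ζ hζ => hall ζ (Finset.mem_insert_of_mem hζ)
    have hζ₀ : ζ₀ ≠ 0 := hall ζ₀ (Finset.mem_insert_self _ _)
    obtain ⟨c, hc⟩ := Infinite.exists_notMem_finset
      ((insert ζ₀ Zs).image fun ζ => -⟪q, ζ⟫ / ⟪ζ₀, ζ⟫)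
    refine ⟨q + c • ζ₀, ?_⟩
    intro ζ hζ hzero
    rw [inner_add_left, real_inner_smul_left] at hzero
    by_cases horth : ⟪ζ₀, ζ⟫ = (0 : ℝ)
    · rw [horth, mul_zero, add_zero] at hzero
      rcases Finset.mem_insert.mp hζ with rfl | hζ'
      · exact hζ₀ (inner_self_eq_zero.mp horth)
      · exact hq ζ hζ' hzero
    · apply hc
      rw [Finset.mem_image]
      refine ⟨ζ, hζ, ?_⟩
      rw [div_eq_iff horth]
      linarith

theorem exists_x0 (R : RootSystemData V) (hP : R.pos.Nonempty) :
    ∃ x₀ : V, (∀ α ∈ R.pos, 0 < ⟪x₀, α⟫ ∧ ⟪x₀, α⟫ < 1) ∧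
      (∀ t : ℝ, ∀ α ∈ R.pos, ∀ β ∈ R.pos, α ≠ β → ∀ k m : ℤ,
        ¬(⟪x₀ + t • R.ξ, α⟫ = (k : ℝ) ∧ ⟪x₀ + t • R.ξ, β⟫ = (m : ℝ))) := by
  classical
  set F : Finset V := R.pos_finite.toFinset with hFdef
  have hF : ∀ α, α ∈ F ↔ α ∈ R.pos := fun α => Set.Finite.mem_toFinset _
  have hFne : F.Nonempty := by
    obtain ⟨α, hα⟩ := hP; exact ⟨α, (hF α).mpr hα⟩
  have hFneim : (F.image fun α => 1 / (2 * ⟪R.ξ, α⟫)).Nonempty := hFne.image _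
  set ε : ℝ := (F.image fun α => 1 / (2 * ⟪R.ξ, α⟫)).min' hFneim with hεdef
  have hεpos : 0 < ε := by
    obtain ⟨α, hαF, hεeq⟩ := Finset.mem_image.mp ((F.image _).min'_mem hFneim)
    have hb := ((hF α).mp hαF).2
    rw [hεdef, ← hεeq]
    positivity
  have hεle : ∀ α ∈ R.pos, ε ≤ 1 / (2 * ⟪R.ξ, α⟫) := fun α hα =>
    Finset.min'_le _ _ (Finset.mem_image_of_mem _ ((hF α).mpr hα))
  set p : V := ε • R.ξ with hpdef
  have hpB : p ∈ R.BoxF fun _ => 0 := by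
    intro α hα
    have hb := hα.2
    have h1 : ⟪p, α⟫ = ε * ⟪R.ξ, α⟫ := by rw [hpdef, real_inner_smul_left]
    have h2 : ε * ⟪R.ξ, α⟫ ≤ 1 / 2 := by
      have h3 : ε * ⟪R.ξ, α⟫ ≤ 1 / (2 * ⟪R.ξ, α⟫) * ⟪R.ξ, α⟫ :=
        mul_le_mul_of_nonneg_right (hεle α hα) (le_of_lt hb)
      have h4 : 1 / (2 * ⟪R.ξ, α⟫) * ⟪R.ξ, α⟫ = 1 / 2 := by
        field_simp
      linarith
    constructor
    · push_cast; rw [h1]; positivity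
    · push_cast; rw [h1]; linarith
  obtain ⟨r, hrpos, hrball⟩ := Metric.isOpen_iff.mp (R.boxF_open fun _ => 0) p hpB
  set Z : Finset V := (((F ×ˢ F).filter fun pr => pr.1 ≠ pr.2).image
    fun pr => ⟪R.ξ, pr.2⟫ • pr.1 - ⟪R.ξ, pr.1⟫ • pr.2) with hZdef
  have hZ : ∀ ζ ∈ Z, ζ ≠ (0 : V) := by
    intro ζ hζ
    obtain ⟨⟨α, β⟩, hpr, rfl⟩ := Finset.mem_image.mp hζ
    obtain ⟨hprm, hne⟩ := Finset.mem_filter.mp hpr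
    obtain ⟨hαF, hβF⟩ := Finset.mem_product.mp hprm
    have hα := (hF α).mp hαF
    have hβ := (hF β).mp hβF
    intro h0
    have heq : ⟪R.ξ, β⟫ • α = ⟪R.ξ, α⟫ • β := by
      have := sub_eq_zero.mp h0
      exact this
    have hβeq : β = (⟪R.ξ, β⟫ / ⟪R.ξ, α⟫) • α := by
      have ha := hα.2
      have h3 : (⟪R.ξ, α⟫)⁻¹ • (⟪R.ξ, α⟫ • β) = (⟪R.ξ, α⟫)⁻¹ • (⟪R.ξ, β⟫ • α) := by
        rw [← heq]
      rw [smul_smul, smul_smul, inv_mul_cancel₀ (ne_of_gt ha), one_smul] at h3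
      rw [div_eq_inv_mul]
      exact h3
    have := R.reduced α hα.1 (⟪R.ξ, β⟫ / ⟪R.ξ, α⟫) (by rw [← hβeq]; exact hβ.1)
    rcases this with h1 | h1
    · rw [h1, one_smul] at hβeq
      exact hne hβeq.symm
    · rw [h1, neg_one_smul] at hβeq
      have := hβ.2
      rw [hβeq, inner_neg_right] at this
      linarith [hα.2]
  obtain ⟨q, hq⟩ := exists_nonorth Z hZ
  set δ : ℝ := r / (‖q‖ + 1) with hδdef
  have hδpos : 0 < δ := by
    rw [hδdef]; positivity
  set bad : Set ℝ := ⋃ pr ∈ (↑((F ×ˢ F).filter fun pr => pr.1 ≠ pr.2) : Set (V × V)),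
    ⋃ z : ℤ × ℤ, {s : ℝ | ⟪p + s • q, ⟪R.ξ, pr.2⟫ • pr.1 - ⟪R.ξ, pr.1⟫ • pr.2⟫ =
      z.1 * ⟪R.ξ, pr.2⟫ - z.2 * ⟪R.ξ, pr.1⟫} with hbaddef
  have hbadc : bad.Countable := by
    refine Set.Countable.biUnion (Finset.countable_toSet _) fun pr hpr => ?_
    refine Set.countable_iUnion fun z => Set.Subsingleton.countable ?_
    intro s1 h1 s2 h2
    have hζZ : (⟪R.ξ, pr.2⟫ • pr.1 - ⟪R.ξ, pr.1⟫ • pr.2) ∈ Z := by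
      rw [hZdef]
      exact Finset.mem_image_of_mem _ hpr
    have hqζ := hq _ hζZ
    simp only [Set.mem_setOf_eq] at h1 h2
    rw [inner_ray] at h1 h2
    have heq12 : s1 * ⟪q, ⟪R.ξ, pr.2⟫ • pr.1 - ⟪R.ξ, pr.1⟫ • pr.2⟫ =
        s2 * ⟪q, ⟪R.ξ, pr.2⟫ • pr.1 - ⟪R.ξ, pr.1⟫ • pr.2⟫ := by linarith
    exact mul_right_cancel₀ hqζ heq12
  have hnotsub : ¬(Set.Ioo (0 : ℝ) δ ⊆ bad) := by
    intro hsub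
    have hc : (Set.Ioo (0 : ℝ) δ).Countable := hbadc.mono hsub
    have h0 := hc.measure_zero MeasureTheory.volume
    rw [Real.volume_Ioo] at h0
    simp only [sub_zero] at h0
    exact (ENNReal.ofReal_pos.mpr hδpos).ne' h0
  obtain ⟨sg, hsgI, hsgbad⟩ := Set.not_subset.mp hnotsub
  obtain ⟨hsg0, hsgδ⟩ := hsgI
  set x₀ : V := p + sg • q with hx₀def
  have hx₀B : x₀ ∈ R.BoxF fun _ => 0 := by
    apply hrball
    rw [Metric.mem_ball, dist_eq_norm]
    have : x₀ - p = sg • q := by rw [hx₀def]; abel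
    rw [this, norm_smul, Real.norm_eq_abs, abs_of_pos hsg0]
    calc sg * ‖q‖ ≤ sg * (‖q‖ + 1) := by nlinarith [norm_nonneg q]
      _ < δ * (‖q‖ + 1) := by nlinarith [norm_nonneg q]
      _ = r := by rw [hδdef]; field_simp
  refine ⟨x₀, ?_, ?_⟩
  · intro α hα
    obtain ⟨h1, h2⟩ := hx₀B α hα
    push_cast at h1 h2
    exact ⟨h1, by linarith⟩
  · intro t α hα β hβ hne k m ⟨h1, h2⟩
    apply hsgbad
    rw [hbaddef]
    refine Set.mem_biUnion (show ((α, β) : V × V) ∈ _ from ?_) ?_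
    · rw [Finset.mem_coe, Finset.mem_filter, Finset.mem_product]
      exact ⟨⟨(hF α).mpr hα, (hF β).mpr hβ⟩, hne⟩
    · refine Set.mem_iUnion.mpr ⟨(k, m), ?_⟩
      show ⟪p + sg • q, ⟪R.ξ, β⟫ • α - ⟪R.ξ, α⟫ • β⟫ = (k : ℝ) * ⟪R.ξ, β⟫ - (m : ℝ) * ⟪R.ξ, α⟫
      rw [inner_ray] at h1 h2
      have hx1 : ⟪x₀, α⟫ = (k : ℝ) - t * ⟪R.ξ, α⟫ := by linarith
      have hx2 : ⟪x₀, β⟫ = (m : ℝ) - t * ⟪R.ξ, β⟫ := by linarith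
      rw [← hx₀def]
      rw [inner_sub_right, real_inner_smul_right, real_inner_smul_right, hx1, hx2]
      ring


end RootSystemData

/-- if `v` is special, `u ∈ W₀`, `D = v + u(C)` and `C ∩ D = ∅`, then there is an
infinite minimal gallery starting at the base alcove, staying in `C`, whose distance to the
alcoves contained in `D` tends to infinity. -/
theorem statement3 {V : Type*} [NormedAddCommGroup V] [InnerProductSpace ℝ V]
    [FiniteDimensional ℝ V] (R : RootSystemData V) (v : V) (hv : R.IsSpecial v)
    (u : V ≃ₗᵢ[ℝ] V) (hu : u ∈ R.W0)
    (hdisj : R.chamber ∩ ((fun x => v + u x) '' R.chamber) = ∅) :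
    ∃ A : ℕ → Set V, A 0 = R.baseAlcove ∧
      (∀ i, R.IsAlcove (A i) ∧ A i ⊆ R.chamber) ∧
      (∀ i, R.Adjacent (A i) (A (i + 1))) ∧
      (∀ i j, i ≤ j → R.dist (A i) (A j) = j - i) ∧
      (∀ N : ℕ, ∃ I : ℕ, ∀ i ≥ I, ∀ B : Set V, R.IsAlcove B →
        B ⊆ (fun x => v + u x) '' R.chamber → N < R.dist (A i) B) := by
  classical
  by_cases hP : R.pos.Nonempty
  case neg =>
    exfalso
    rw [Set.not_nonempty_iff_eq_empty] at hP
    have hC : ∀ x : V, x ∈ R.chamber := by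
      intro x α hα
      rw [hP] at hα
      exact absurd hα (Set.notMem_empty α)
    have hmem : v + u 0 ∈ R.chamber ∩ ((fun x => v + u x) '' R.chamber) :=
      ⟨hC _, ⟨0, hC 0, rfl⟩⟩
    rw [hdisj] at hmem
    exact hmem
  case pos =>
  obtain ⟨x₀, h₀, hgen⟩ := R.exists_x0 hP
  have h₀c : x₀ + (0 : ℝ) • R.ξ ∈ R.hypUnionᶜ := by
    rw [zero_smul, add_zero]
    apply R.boxF_subset_compl fun _ => 0
    intro α hα
    obtain ⟨a, b⟩ := h₀ α hα
    exact ⟨by push_cast; exact a, by push_cast; linarith⟩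
  obtain ⟨s, hs0, hsmono, hscompl, hbump⟩ := R.exists_gallery_seq hP h₀c hgen
  set x : ℕ → V := fun i => x₀ + s i • R.ξ with hxdef
  set f : ℕ → V → ℤ := fun i => flrF (x i) with hfdef
  set A : ℕ → Set V := fun i => R.BoxF (f i) with hAdef
  set F : Finset V := R.pos_finite.toFinset with hFdef
  have hF : ∀ α, α ∈ F ↔ α ∈ R.pos := fun α => Set.Finite.mem_toFinset _
  have hFne : F.Nonempty := by
    obtain ⟨α, hα⟩ := hP; exact ⟨α, (hF α).mpr hα⟩
  have hxival : ∀ i α, ⟪x i, α⟫ = ⟪x₀, α⟫ + s i * ⟪R.ξ, α⟫ := fun i α =>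
    RootSystemData.inner_ray x₀ R.ξ (s i) α
  have hf0 : ∀ α ∈ R.pos, f 0 α = 0 := by
    intro α hα
    obtain ⟨a, b⟩ := h₀ α hα
    have hx0 : x 0 = x₀ := by rw [hxdef]; simp only [hs0, zero_smul, add_zero]
    show ⌊⟪x 0, α⟫⌋ = 0
    rw [hx0]
    rw [Int.floor_eq_iff]
    constructor
    · push_cast; linarith
    · push_cast; linarith
  have hmono1 : ∀ i, ∀ α ∈ R.pos, f i α ≤ f (i + 1) α := by
    intro i α hα
    obtain ⟨γ, hγ, hb, ho⟩ := hbump i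
    have hb' : f (i + 1) γ = f i γ + 1 := hb
    by_cases h : α = γ
    · subst h; omega
    · have ho' : f (i + 1) α = f i α := ho α hα h
      omega
  have hmono : ∀ i j, i ≤ j → ∀ α ∈ R.pos, f i α ≤ f j α := by
    intro i j hij
    induction j with
    | zero =>
      intro α hα
      have h0 : i = 0 := by omega
      subst h0
      exact le_refl _
    | succ j ih =>
      intro α hα
      rcases Nat.lt_or_ge i (j + 1) with hlt | hge
      · exact le_trans (ih (by omega) α hα) (hmono1 j α hα)
      · have : i = j + 1 := by omega
        subst this; exact le_refl _
  have hnonneg : ∀ i, ∀ α ∈ R.pos, 0 ≤ f i α := by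
    intro i α hα
    have := hmono 0 i (by omega) α hα
    rw [hf0 α hα] at this
    exact this
  have hmemx : ∀ i, x i ∈ A i := fun i => R.mem_boxF_self (hscompl i)
  have hne : ∀ i, (A i).Nonempty := fun i => ⟨x i, hmemx i⟩
  have halc : ∀ i, R.IsAlcove (A i) := fun i =>
    ⟨x i, hscompl i, (R.component_eq_boxF (hscompl i)).symm⟩
  have hsub : ∀ i, A i ⊆ R.chamber := by
    intro i y hy α hα
    obtain ⟨h1, h2⟩ := hy α hα
    have h3 := hnonneg i α hα
    have h4 : (0 : ℝ) ≤ (f i α : ℝ) := by exact_mod_cast h3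
    linarith
  have hdistf : ∀ i j, i ≤ j → R.dist (A i) (A j) = j - i := by
    intro i j hij
    induction j with
    | zero =>
      have : i = 0 := by omega
      subst this
      show R.dist (R.BoxF (f 0)) (R.BoxF (f 0)) = 0
      rw [R.dist_boxF _ _ (hne 0) (hne 0), R.pairSet_self, Set.ncard_empty]
    | succ j ih =>
      rcases Nat.lt_or_ge i (j + 1) with hlt | hge
      · have hij' : i ≤ j := by omega
        have ihv := ih hij'
        obtain ⟨γ, hγ, hb, ho⟩ := hbump j
        have hb' : f (j + 1) γ = f j γ + 1 := hb
        have ho' : ∀ α ∈ R.pos, α ≠ γ → f (j + 1) α = f j α := ho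
        have hu := R.pairSet_union (f := f i) (g := f j) (h := f (j + 1))
          (hmono i j hij') (hmono1 j)
        show R.dist (R.BoxF (f i)) (R.BoxF (f (j + 1))) = j + 1 - i
        rw [R.dist_boxF _ _ (hne i) (hne (j + 1)), hu.1,
          Set.ncard_union_eq hu.2 (R.pairSet_finite _ _) (R.pairSet_finite _ _),
          R.pairSet_single hγ hb' ho', Set.ncard_singleton,
          ← R.dist_boxF _ _ (hne i) (hne j)]
        have : R.dist (R.BoxF (f i)) (R.BoxF (f j)) = j - i := ihv
        omega
      · have hi' : i = j + 1 := by omega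
        subst hi'
        show R.dist (R.BoxF (f (j + 1))) (R.BoxF (f (j + 1))) = j + 1 - (j + 1)
        rw [R.dist_boxF _ _ (hne (j + 1)) (hne (j + 1)), R.pairSet_self, Set.ncard_empty]
        omega
  have hadj : ∀ i, R.Adjacent (A i) (A (i + 1)) := by
    intro i
    obtain ⟨γ, hγ, hb, ho⟩ := hbump i
    have hb' : f (i + 1) γ = f i γ + 1 := hb
    constructor
    · intro hAeq
      have hx' : x (i + 1) ∈ A i := hAeq ▸ hmemx (i + 1)
      obtain ⟨h1, h2⟩ := hx' γ hγ
      obtain ⟨h3, h4⟩ := (hmemx (i + 1)) γ hγ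
      rw [hb'] at h3
      push_cast at h2 h3
      linarith
    · have h5 := hdistf i (i + 1) (by omega)
      simpa using h5
  have hA0 : A 0 = R.baseAlcove := by
    ext y
    constructor
    · intro hy α hα
      obtain ⟨h1, h2⟩ := hy α hα
      rw [hf0 α hα] at h1 h2
      push_cast at h1 h2
      exact ⟨h1, by linarith⟩
    · intro hy α hα
      obtain ⟨h1, h2⟩ := hy α hα
      rw [hf0 α hα]
      push_cast
      exact ⟨h1, by linarith⟩
  -- quantitative growth
  have hfl_lb : ∀ i, ∀ α ∈ R.pos, ⟪x₀, α⟫ + s i * ⟪R.ξ, α⟫ - 1 < (f i α : ℝ) := by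
    intro i α hα
    have h1 : ⟪x i, α⟫ < (f i α : ℝ) + 1 := Int.lt_floor_add_one _
    rw [hxival i α] at h1
    linarith
  have hfl_ub : ∀ i, ∀ α ∈ R.pos, (f i α : ℝ) ≤ ⟪x₀, α⟫ + s i * ⟪R.ξ, α⟫ := by
    intro i α hα
    have h1 : (f i α : ℝ) ≤ ⟪x i, α⟫ := Int.floor_le _
    rw [hxival i α] at h1
    exact h1
  have hsum : ∀ i, (∑ α ∈ F, f i α) = (i : ℤ) := by
    intro i
    induction i with
    | zero =>
      rw [Finset.sum_eq_zero fun α hαF => hf0 α ((hF α).mp hαF)]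
      rfl
    | succ i ih =>
      obtain ⟨γ, hγ, hb, ho⟩ := hbump i
      have hb' : f (i + 1) γ = f i γ + 1 := hb
      have hstep : ∑ α ∈ F, f (i + 1) α = ∑ α ∈ F, (f i α + if α = γ then 1 else 0) := by
        refine Finset.sum_congr rfl fun α hαF => ?_
        by_cases h : α = γ
        · subst h; rw [if_pos rfl, hb']
        · rw [if_neg h, add_zero]
          exact ho α ((hF α).mp hαF) h
      rw [hstep, Finset.sum_add_distrib, ih, Finset.sum_ite_eq' F γ fun _ => (1 : ℤ),
        if_pos ((hF γ).mpr hγ)]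
      push_cast
      ring
  set D : ℝ := ∑ α ∈ F, ⟪R.ξ, α⟫ with hDdef
  have hDpos : 0 < D := Finset.sum_pos (fun α hαF => ((hF α).mp hαF).2) hFne
  set c0 : ℝ := ∑ α ∈ F, ⟪x₀, α⟫ with hc0def
  have hsle : ∀ i : ℕ, (i : ℝ) ≤ c0 + s i * D := by
    intro i
    have h1 : ((∑ α ∈ F, f i α : ℤ) : ℝ) ≤ ∑ α ∈ F, (⟪x₀, α⟫ + s i * ⟪R.ξ, α⟫) := by
      push_cast
      exact Finset.sum_le_sum fun α hαF => hfl_ub i α ((hF α).mp hαF)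
    rw [hsum i] at h1
    push_cast at h1
    rw [Finset.sum_add_distrib, ← Finset.mul_sum] at h1
    rw [hDdef, hc0def]
    linarith
  have hbminne : (F.image fun α => ⟪R.ξ, α⟫).Nonempty := hFne.image _
  set bmin : ℝ := (F.image fun α => ⟪R.ξ, α⟫).min' hbminne with hbmindef
  have hbminpos : 0 < bmin := by
    obtain ⟨α, hαF, hbe⟩ := Finset.mem_image.mp ((F.image fun α => ⟪R.ξ, α⟫).min'_mem hbminne)
    rw [hbmindef, ← hbe]
    exact ((hF α).mp hαF).2
  have hbminle : ∀ α ∈ R.pos, bmin ≤ ⟪R.ξ, α⟫ := fun α hα =>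
    Finset.min'_le _ _ (Finset.mem_image_of_mem _ ((hF α).mpr hα))
  refine ⟨A, hA0, fun i => ⟨halc i, hsub i⟩, hadj, hdistf, ?_⟩
  intro N
  set Sreq : ℝ := ((N : ℝ) + 2) / bmin with hSreqdef
  have hSreqpos : 0 < Sreq := by rw [hSreqdef]; positivity
  refine ⟨⌈c0 + D * Sreq⌉₊, ?_⟩
  intro i hi B halcB hBD
  have hsi : Sreq ≤ s i := by
    have h1 : c0 + D * Sreq ≤ (⌈c0 + D * Sreq⌉₊ : ℝ) := Nat.le_ceil _
    have h2 : ((⌈c0 + D * Sreq⌉₊ : ℕ) : ℝ) ≤ (i : ℝ) := by exact_mod_cast hi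
    have h3 := hsle i
    nlinarith
  obtain ⟨xB, hxBc, hBeq⟩ := halcB
  have hBbox : B = R.BoxF (flrF xB) := by rw [hBeq, R.component_eq_boxF hxBc]
  have hxBB : xB ∈ B := hBeq ▸ mem_connectedComponentIn hxBc
  have hBne : B.Nonempty := ⟨xB, hxBB⟩
  have hneg : ∃ α₀ ∈ R.pos, flrF xB α₀ < 0 := by
    by_contra h
    push_neg at h
    have hxBC : xB ∈ R.chamber := by
      intro α hα
      obtain ⟨h1, h2⟩ := (R.mem_boxF_self hxBc) α hα
      have h3 := h α hα
      have h4 : (0 : ℝ) ≤ (flrF xB α : ℝ) := by exact_mod_cast h3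
      linarith
    have hmem2 : xB ∈ R.chamber ∩ ((fun x => v + u x) '' R.chamber) := ⟨hxBC, hBD hxBB⟩
    rw [hdisj] at hmem2
    exact hmem2
  obtain ⟨α₀, hα₀, hgneg⟩ := hneg
  have hfiN : (N : ℝ) + 1 ≤ (f i α₀ : ℝ) := by
    have h1 := hfl_lb i α₀ hα₀
    have h2 : Sreq * bmin ≤ s i * ⟪R.ξ, α₀⟫ := by
      have hb := hbminle α₀ hα₀
      nlinarith
    have h3 : Sreq * bmin = (N : ℝ) + 2 := by
      rw [hSreqdef]
      field_simp
    have h4 := (h₀ α₀ hα₀).1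
    linarith
  have hfiN' : (N : ℤ) < f i α₀ := by
    have : ((N : ℤ) : ℝ) < (f i α₀ : ℝ) := by push_cast; linarith
    exact_mod_cast this
  have hdeq : R.dist (A i) B = (R.PairSet (f i) (flrF xB)).ncard := by
    rw [hBbox]
    exact R.dist_boxF _ _ (hne i) (hBbox ▸ hBne)
  have hsubpair : (fun k => ((α₀ : V), k)) '' Set.Ioc (flrF xB α₀) (f i α₀) ⊆
      R.PairSet (f i) (flrF xB) := by
    rintro p ⟨k, hk, rfl⟩
    exact RootSystemData.mem_pairSet.mpr ⟨hα₀, Or.inl ⟨hk.1, hk.2⟩⟩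
  have hcard : ((fun k => ((α₀ : V), k)) '' Set.Ioc (flrF xB α₀) (f i α₀)).ncard =
      (f i α₀ - flrF xB α₀).toNat := by
    rw [Set.ncard_image_of_injOn (fun k1 _ k2 _ h => by
      simpa using congrArg Prod.snd h)]
    rw [← Finset.coe_Ioc, Set.ncard_coe_finset, Int.card_Ioc]
  have hle2 : (f i α₀ - flrF xB α₀).toNat ≤ R.dist (A i) B := by
    rw [hdeq, ← hcard]
    exact Set.ncard_le_ncard hsubpair (R.pairSet_finite _ _)
  omega
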